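/- Fix x̄ ∈ ℝ^N and r > 0, and consider on ℝ^N∖B_{H₀}(x̄,r) the function v_r(x) = (H₀(x−x̄)/r)^{1/q} with q = −(p−1)/(N−p). Then v_r is q-concave (i.e. (v_r)^q = H₀(x−x̄)/r is convex), but for every β with q < β ≤ 1 the function v_r is not β-concave. Hence the concavity exponent of the Wulff shape B_{H₀}(x̄,r) equals q. -/

import Mathlib

open Filter MeasureTheory Set Metric
open scoped Topology NNReal Pointwise

noncomputable section

/-- Euclidean space `ℝ^N`. -/
abbrev En (N : ℕ) : Type := EuclideanSpace ℝ (Fin N)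

/-- `H` is a norm on `ℝ^N`: convex, nonnegative, vanishing only at the origin,
and absolutely `1`-homogeneous. -/
structure IsNorm {N : ℕ} (H : En N → ℝ) : Prop where
  convex : ConvexOn ℝ Set.univ H
  nonneg : ∀ ξ, 0 ≤ H ξ
  eq_zero_iff : ∀ ξ, H ξ = 0 ↔ ξ = 0
  abs_smul : ∀ (t : ℝ) (ξ : En N), H (t • ξ) = |t| * H ξ

/-- The dual norm `H₀(x) = sup_{ξ ≠ 0} ⟨x, ξ⟩ / H(ξ)`. -/
def dualNorm {N : ℕ} (H : En N → ℝ) (x : En N) : ℝ :=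
  ⨆ ξ : {ξ : En N // ξ ≠ 0}, (inner ℝ x ξ.1 : ℝ) / H ξ.1

/-- The Wulff shape `B_{H₀}(x̄, r) = {x : H₀(x - x̄) < r}`. -/
def wulff {N : ℕ} (H : En N → ℝ) (xbar : En N) (r : ℝ) : Set (En N) :=
  {x | dualNorm H (x - xbar) < r}

/-- `u` is a weak solution of the Finsler `p`-Laplace equation `Δ_p^H u = 0` on the set `E`:
`∫_E H(∇u)^(p-1) ⟨∇H(∇u), ∇φ⟩ = 0` for every test function `φ` compactly supported in `E`. -/
def IsWeakSol {N : ℕ} (H : En N → ℝ) (p : ℝ) (u : En N → ℝ) (E : Set (En N)) : Prop :=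
  ∀ φ : En N → ℝ, ContDiff ℝ (⊤ : ℕ∞) φ → HasCompactSupport φ → tsupport φ ⊆ E →
    (∫ x in E, H (gradient u x) ^ (p - 1) * (inner ℝ (gradient H (gradient u x)) (gradient φ x) : ℝ)) = 0

/-- `u` is the Finsler `p`-capacitary potential of the set `K`: continuous on `ℝ^N ∖ K`,
`C¹` outside the closure, a weak solution of `Δ_p^H u = 0` outside the closure, `= 1` on the
boundary of `K`, and tending to `0` as `H₀(x) → ∞`. -/
def IsCapPotential {N : ℕ} (H : En N → ℝ) (p : ℝ) (K : Set (En N)) (u : En N → ℝ) : Prop :=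
  ContinuousOn u (interior K)ᶜ ∧ ContDiffOn ℝ 1 u (closure K)ᶜ ∧
  IsWeakSol H p u (closure K)ᶜ ∧ (∀ x ∈ frontier K, u x = 1) ∧
  Tendsto u (comap (dualNorm H) atTop) (𝓝 0)

/-- The regularity class `𝒥_p`: `H ∈ C²` away from the origin with positive definite Hessian of
`H²/2`, and `H^p ∈ C^{2,1}` away from the origin. -/
structure InJp {N : ℕ} (H : En N → ℝ) (p : ℝ) : Prop where
  c2 : ContDiffOn ℝ 2 H {(0 : En N)}ᶜ
  hess_pos : ∀ x : En N, x ≠ 0 → ∀ v : En N, v ≠ 0 →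
    0 < iteratedFDeriv ℝ 2 (fun y => H y ^ 2 / 2) x ![v, v]
  hp_c2 : ContDiffOn ℝ 2 (fun ξ => H ξ ^ p) {(0 : En N)}ᶜ
  hp_lip : ∀ x : En N, x ≠ 0 → ∃ ε > 0, ∃ L : NNReal,
    LipschitzOnWith L (iteratedFDeriv ℝ 2 (fun ξ => H ξ ^ p)) (ball x ε)

/-- `f` is convex on the (possibly non-convex) set `s`: the convexity inequality holds whenever
the convex combination of two points of `s` also lies in `s`. -/
def ConvexOnSet {N : ℕ} (s : Set (En N)) (f : En N → ℝ) : Prop :=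
  ∀ ⦃x⦄, x ∈ s → ∀ ⦃y⦄, y ∈ s → ∀ ⦃a b : ℝ⦄, 0 ≤ a → 0 ≤ b → a + b = 1 →
    a • x + b • y ∈ s → f (a • x + b • y) ≤ a * f x + b * f y

/-- `f` is concave on the (possibly non-convex) set `s`. -/
def ConcaveOnSet {N : ℕ} (s : Set (En N)) (f : En N → ℝ) : Prop :=
  ∀ ⦃x⦄, x ∈ s → ∀ ⦃y⦄, y ∈ s → ∀ ⦃a b : ℝ⦄, 0 ≤ a → 0 ≤ b → a + b = 1 →
    a • x + b • y ∈ s → a * f x + b * f y ≤ f (a • x + b • y)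

/-- `u` is `β`-concave on `s`: `u^β` convex for `β < 0`, `log u` concave for `β = 0`,
`u^β` concave for `β > 0`. -/
def AlphaConcaveOn {N : ℕ} (s : Set (En N)) (u : En N → ℝ) (β : ℝ) : Prop :=
  (β < 0 → ConvexOnSet s fun x => u x ^ β) ∧
  (β = 0 → ConcaveOnSet s fun x => Real.log (u x)) ∧
  (0 < β → ConcaveOnSet s fun x => u x ^ β)

/-- The concavity exponent `α = sup {β ≤ 1 : u is β-concave on s}`, as an extended real. -/
def concavityExponent {N : ℕ} (s : Set (En N)) (u : En N → ℝ) : EReal :=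
  sSup {β : EReal | ∃ b : ℝ, β = (b : EReal) ∧ b ≤ 1 ∧ AlphaConcaveOn s u b}

/-- `Ω` has boundary of class `C²`: it is the sublevel set of a `C²` defining function with
non-vanishing gradient on the boundary. -/
def C2Boundary {N : ℕ} (Ω : Set (En N)) : Prop :=
  ∃ f : En N → ℝ, ContDiff ℝ 2 f ∧ Ω = {x | f x < 0} ∧
    frontier Ω = {x | f x = 0} ∧ ∀ x ∈ frontier Ω, gradient f x ≠ 0

/-- `Ω` has boundary of class `C²` with strictly positive principal curvatures: additionally the
Hessian of the defining function is positive on tangent directions. -/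
def C2PlusBoundary {N : ℕ} (Ω : Set (En N)) : Prop :=
  ∃ f : En N → ℝ, ContDiff ℝ 2 f ∧ Ω = {x | f x < 0} ∧
    frontier Ω = {x | f x = 0} ∧ (∀ x ∈ frontier Ω, gradient f x ≠ 0) ∧
    ∀ x ∈ frontier Ω, ∀ v : En N, v ≠ 0 → (inner ℝ v (gradient f x) : ℝ) = 0 →
      0 < iteratedFDeriv ℝ 2 f x ![v, v]

/-- `Ω` has boundary of class `C^{2,α}`: a `C²` defining function with non-vanishing gradient on
the boundary whose second derivative is locally `α`-Hölder near the boundary. -/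
def C2HolderBoundary {N : ℕ} (Ω : Set (En N)) : Prop :=
  ∃ f : En N → ℝ, ∃ a : NNReal, 0 < a ∧ a ≤ 1 ∧ ContDiff ℝ 2 f ∧ Ω = {x | f x < 0} ∧
    frontier Ω = {x | f x = 0} ∧ (∀ x ∈ frontier Ω, gradient f x ≠ 0) ∧
    ∀ x ∈ frontier Ω, ∃ ε > 0, ∃ Cst : NNReal,
      HolderOnWith Cst a (iteratedFDeriv ℝ 2 f) (ball x ε)

/-- The Finsler `p`-capacity
`Cap_{H,p}(K) = inf {(1/p) ∫ H(∇φ)^p : φ ∈ C_c^∞(ℝ^N), φ ≥ 1 on K}`. -/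
def finslerCapacity {N : ℕ} (H : En N → ℝ) (p : ℝ) (K : Set (En N)) : ℝ :=
  sInf {c : ℝ | ∃ φ : En N → ℝ, ContDiff ℝ (⊤ : ℕ∞) φ ∧ HasCompactSupport φ ∧
    (∀ x ∈ K, 1 ≤ φ x) ∧ c = (1 / p) * ∫ x, H (gradient φ x) ^ p}

section WulffAux

variable {N : ℕ} {H : En N → ℝ}

lemma hnorm_zero (hH : IsNorm H) : H 0 = 0 := (hH.eq_zero_iff 0).mpr rfl

lemma hnorm_pos (hH : IsNorm H) {ξ : En N} (h : ξ ≠ 0) : 0 < H ξ :=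
  lt_of_le_of_ne (hH.nonneg ξ) fun h' => h ((hH.eq_zero_iff ξ).mp h'.symm)

lemma hnorm_lower (hN : 3 ≤ N) (hH : IsNorm H) : ∃ c : ℝ, 0 < c ∧ ∀ ξ, c * ‖ξ‖ ≤ H ξ := by
  have hcont : Continuous H := by
    rw [← continuousOn_univ]
    exact hH.convex.continuousOn isOpen_univ
  set e : En N := EuclideanSpace.single (⟨0, by omega⟩ : Fin N) (1:ℝ) with he
  have hen : ‖e‖ = 1 := by simp [he, EuclideanSpace.norm_single]
  have hsph : (sphere (0:En N) 1).Nonempty := ⟨e, by simp [mem_sphere_zero_iff_norm, hen]⟩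
  obtain ⟨z, hz, hzmin⟩ := (isCompact_sphere (0:En N) 1).exists_isMinOn hsph hcont.continuousOn
  have hz1 : ‖z‖ = 1 := mem_sphere_zero_iff_norm.mp hz
  have hz0 : z ≠ 0 := by intro h; rw [h] at hz1; simp at hz1
  refine ⟨H z, hnorm_pos hH hz0, fun ξ => ?_⟩
  by_cases hξ : ξ = 0
  · simp [hξ, hnorm_zero hH]
  · have hn : (0:ℝ) < ‖ξ‖ := norm_pos_iff.mpr hξ
    have hmem : ‖ξ‖⁻¹ • ξ ∈ sphere (0:En N) 1 := by
      simp [mem_sphere_zero_iff_norm, norm_smul, abs_of_pos (inv_pos.mpr hn),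
        inv_mul_cancel₀ hn.ne']
    have hmin : H z ≤ H (‖ξ‖⁻¹ • ξ) := hzmin hmem
    have heq : H (‖ξ‖⁻¹ • ξ) = ‖ξ‖⁻¹ * H ξ := by
      rw [hH.abs_smul, abs_of_pos (inv_pos.mpr hn)]
    rw [heq] at hmin
    have h2 := mul_le_mul_of_nonneg_left hmin hn.le
    rw [← mul_assoc, mul_inv_cancel₀ hn.ne', one_mul] at h2
    rw [mul_comm]; exact h2

lemma dual_term_le (hH : IsNorm H) {c : ℝ} (hc0 : 0 < c) (hc : ∀ ξ, c * ‖ξ‖ ≤ H ξ)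
    (x : En N) (ξ : {ξ : En N // ξ ≠ 0}) :
    (inner ℝ x ξ.1 : ℝ) / H ξ.1 ≤ ‖x‖ / c := by
  have hpos := hnorm_pos hH ξ.2
  rw [div_le_div_iff₀ hpos hc0]
  nlinarith [real_inner_le_norm x ξ.1, hc ξ.1, norm_nonneg x, norm_nonneg ξ.1,
    mul_le_mul_of_nonneg_right (real_inner_le_norm x ξ.1) hc0.le,
    mul_nonneg (norm_nonneg x) (sub_nonneg.mpr (hc ξ.1))]

lemma dual_bdd (hH : IsNorm H) {c : ℝ} (hc0 : 0 < c) (hc : ∀ ξ, c * ‖ξ‖ ≤ H ξ) (x : En N) :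
    BddAbove (Set.range fun ξ : {ξ : En N // ξ ≠ 0} => (inner ℝ x ξ.1 : ℝ) / H ξ.1) := by
  refine ⟨‖x‖ / c, ?_⟩
  rintro _ ⟨ξ, rfl⟩
  exact dual_term_le hH hc0 hc x ξ

lemma le_dual (hH : IsNorm H) {c : ℝ} (hc0 : 0 < c) (hc : ∀ ξ, c * ‖ξ‖ ≤ H ξ)
    (x : En N) {ξ : En N} (hξ : ξ ≠ 0) :
    (inner ℝ x ξ : ℝ) / H ξ ≤ dualNorm H x :=
  le_ciSup (dual_bdd hH hc0 hc x) ⟨ξ, hξ⟩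

lemma dual_le (hne : Nonempty {ξ : En N // ξ ≠ 0}) {x : En N} {a : ℝ}
    (h : ∀ ξ : {ξ : En N // ξ ≠ 0}, (inner ℝ x ξ.1 : ℝ) / H ξ.1 ≤ a) : dualNorm H x ≤ a := by
  haveI := hne; exact ciSup_le h

lemma dual_zero (hne : Nonempty {ξ : En N // ξ ≠ 0}) : dualNorm H 0 = 0 := by
  haveI := hne
  have h : ∀ ξ : {ξ : En N // ξ ≠ 0}, (inner ℝ (0:En N) ξ.1 : ℝ) / H ξ.1 = 0 := by
    intro ξ; simp
  simp only [dualNorm, h, ciSup_const]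

lemma dual_pos (hH : IsNorm H) {c : ℝ} (hc0 : 0 < c) (hc : ∀ ξ, c * ‖ξ‖ ≤ H ξ)
    {x : En N} (hx : x ≠ 0) : 0 < dualNorm H x := by
  have hxx : (0:ℝ) < (inner ℝ x x : ℝ) := by
    rw [real_inner_self_eq_norm_mul_norm]
    have := norm_pos_iff.mpr hx
    positivity
  exact lt_of_lt_of_le (div_pos hxx (hnorm_pos hH hx)) (le_dual hH hc0 hc x hx)

lemma dual_add (hH : IsNorm H) {c : ℝ} (hc0 : 0 < c) (hc : ∀ ξ, c * ‖ξ‖ ≤ H ξ)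
    (hne : Nonempty {ξ : En N // ξ ≠ 0}) (x y : En N) :
    dualNorm H (x + y) ≤ dualNorm H x + dualNorm H y := by
  refine dual_le hne fun ξ => ?_
  rw [inner_add_left, add_div]
  exact add_le_add (le_dual hH hc0 hc x ξ.2) (le_dual hH hc0 hc y ξ.2)

lemma dual_smul (hH : IsNorm H) {c : ℝ} (hc0 : 0 < c) (hc : ∀ ξ, c * ‖ξ‖ ≤ H ξ)
    (hne : Nonempty {ξ : En N // ξ ≠ 0}) {t : ℝ} (ht : 0 ≤ t) (x : En N) :
    dualNorm H (t • x) = t * dualNorm H x := by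
  rcases ht.eq_or_lt with h | h
  · rw [← h, zero_smul, zero_mul, dual_zero hne]
  · apply le_antisymm
    · refine dual_le hne fun ξ => ?_
      rw [real_inner_smul_left, mul_div_assoc]
      exact mul_le_mul_of_nonneg_left (le_dual hH hc0 hc x ξ.2) ht
    · have key : dualNorm H x ≤ dualNorm H (t • x) / t := by
        refine dual_le hne fun ξ => ?_
        rw [le_div_iff₀ h, mul_comm]
        calc t * ((inner ℝ x ξ.1 : ℝ) / H ξ.1) = (inner ℝ (t • x) ξ.1 : ℝ) / H ξ.1 := by
              rw [real_inner_smul_left]; ring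
          _ ≤ dualNorm H (t • x) := le_dual hH hc0 hc _ ξ.2
      calc t * dualNorm H x ≤ t * (dualNorm H (t • x) / t) :=
            mul_le_mul_of_nonneg_left key h.le
        _ = dualNorm H (t • x) := by field_simp

end WulffAux

set_option maxHeartbeats 1000000 in
/-- The potential `v_r(x) = (H₀(x-x̄)/r)^(1/q)` of the Wulff shape is
`q`-concave on `ℝ^N ∖ B_{H₀}(x̄,r)` but not `β`-concave for any `q < β ≤ 1`; hence the
concavity exponent of the Wulff shape equals `q = -(p-1)/(N-p)`. -/
theorem concavityExponent_of_wulff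
    {N : ℕ} (hN : 3 ≤ N) {p : ℝ} (hp1 : 1 < p) (hpN : p < N)
    {H : En N → ℝ} (hH : IsNorm H)
    (xbar : En N) {r : ℝ} (hr : 0 < r)
    {q : ℝ} (hq : q = -(p - 1) / (N - p)) :
    AlphaConcaveOn (wulff H xbar r)ᶜ (fun x => (dualNorm H (x - xbar) / r) ^ (1 / q)) q ∧
    (∀ β : ℝ, q < β → β ≤ 1 →
      ¬ AlphaConcaveOn (wulff H xbar r)ᶜ (fun x => (dualNorm H (x - xbar) / r) ^ (1 / q)) β) ∧
    concavityExponent (wulff H xbar r)ᶜ (fun x => (dualNorm H (x - xbar) / r) ^ (1 / q))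
      = (q : EReal) := by
    -- basic signs
  have hq0 : q < 0 := by
    rw [hq]
    apply div_neg_of_neg_of_pos <;> [skip; skip] <;> nlinarith [hp1, hpN, (by exact_mod_cast (by omega : 3 ≤ N) : (3:ℝ) ≤ (N:ℝ))]
  obtain ⟨c, hc0, hc⟩ := hnorm_lower hN hH
  set e : En N := EuclideanSpace.single (⟨0, by omega⟩ : Fin N) (1:ℝ) with he
  have he0 : e ≠ 0 := by
    intro h
    have h1 : ‖e‖ = 1 := by simp [he, EuclideanSpace.norm_single]
    rw [h] at h1; simp at h1
  have hne : Nonempty {ξ : En N // ξ ≠ 0} := ⟨⟨e, he0⟩⟩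
  have hcE : 0 < dualNorm H e := dual_pos hH hc0 hc he0
  set cE := dualNorm H e with hcEdef
  set s := (wulff H xbar r)ᶜ with hs
  have hmem_iff : ∀ z : En N, z ∈ s ↔ r ≤ dualNorm H (z - xbar) := by
    intro z; simp [hs, wulff, not_lt]
  have hD : ∀ (x y : En N) (a b : ℝ), 0 ≤ a → 0 ≤ b → a + b = 1 →
      dualNorm H (a • x + b • y - xbar) ≤
        a * dualNorm H (x - xbar) + b * dualNorm H (y - xbar) := by
    intro x y a b ha hb hab
    have hrw : a • x + b • y - xbar
        = a • (x - xbar) + b • (y - xbar) + ((a + b) - 1) • xbar := by module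
    rw [hrw, hab, sub_self, zero_smul, add_zero]
    calc dualNorm H (a • (x - xbar) + b • (y - xbar))
        ≤ dualNorm H (a • (x - xbar)) + dualNorm H (b • (y - xbar)) :=
          dual_add hH hc0 hc hne _ _
      _ = a * dualNorm H (x - xbar) + b * dualNorm H (y - xbar) := by
          rw [dual_smul hH hc0 hc hne ha, dual_smul hH hc0 hc hne hb]
  -- Part 1
  have P1 : AlphaConcaveOn s (fun x => (dualNorm H (x - xbar) / r) ^ (1 / q)) q := by
    refine ⟨fun _ => ?_, fun h0 => absurd h0 hq0.ne, fun hpos => absurd hpos (lt_asymm hq0)⟩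
    intro x hx y hy a b ha hb hab hmemc
    have key : ∀ z ∈ s, ((dualNorm H (z - xbar) / r) ^ (1 / q) : ℝ) ^ q
        = dualNorm H (z - xbar) / r := by
      intro z hz
      have h1 : (0:ℝ) ≤ dualNorm H (z - xbar) / r := by
        have := (hmem_iff z).mp hz
        apply div_nonneg (by linarith) hr.le
      rw [← Real.rpow_mul h1, one_div_mul_cancel hq0.ne, Real.rpow_one]
    simp only [] 
    rw [key _ hmemc, key _ hx, key _ hy]
    have h2 := hD x y a b ha hb hab
    have h3 : a * (dualNorm H (x - xbar) / r) + b * (dualNorm H (y - xbar) / r)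
        = (a * dualNorm H (x - xbar) + b * dualNorm H (y - xbar)) / r := by ring
    rw [h3, div_le_div_iff_of_pos_right hr]
    exact h2
  -- points on a ray
  set pts : ℝ → En N := fun t => xbar + (t * (r / cE)) • e with hpts
  have hDpts : ∀ t : ℝ, 0 ≤ t → dualNorm H (pts t - xbar) = t * r := by
    intro t ht
    have h1 : pts t - xbar = (t * (r / cE)) • e := by simp only [hpts]; module
    rw [h1, dual_smul hH hc0 hc hne (by positivity), ← hcEdef]
    field_simp
  have hptsmem : ∀ t : ℝ, 1 ≤ t → pts t ∈ s := by
    intro t ht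
    rw [hmem_iff, hDpts t (by linarith)]
    nlinarith
  have hvpts : ∀ t : ℝ, 1 ≤ t →
      (dualNorm H (pts t - xbar) / r) ^ (1 / q) = t ^ (1 / q) := by
    intro t ht
    rw [hDpts t (by linarith), mul_div_assoc, div_self hr.ne', mul_one]
  have hmid : (1/2 : ℝ) • pts 1 + (1/2 : ℝ) • pts 3 = pts 2 := by
    simp only [hpts]; module
  -- Part 2
  have P2 : ∀ β : ℝ, q < β → β ≤ 1 →
      ¬ AlphaConcaveOn s (fun x => (dualNorm H (x - xbar) / r) ^ (1 / q)) β := by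
    intro β hβq hβ1 hcon
    rcases lt_trichotomy β 0 with hβ | hβ | hβ
    · -- β < 0 : convexity of t ^ (β/q) fails, 0 < β/q < 1
      set γ := β / q with hγ
      have hγ0 : 0 < γ := div_pos_of_neg_of_neg hβ hq0
      have hγ1 : γ < 1 := by rw [hγ, div_lt_iff_of_neg hq0]; linarith
      have happ := hcon.1 hβ (hptsmem 1 le_rfl) (hptsmem 3 (by norm_num))
        (by norm_num : (0:ℝ) ≤ 1/2) (by norm_num : (0:ℝ) ≤ 1/2) (by norm_num)
        (by rw [hmid]; exact hptsmem 2 (by norm_num))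
      simp only [] at happ
      rw [hmid] at happ
      have hval : ∀ t : ℝ, 1 ≤ t →
          ((dualNorm H (pts t - xbar) / r) ^ (1 / q) : ℝ) ^ β = t ^ γ := by
        intro t ht
        rw [hvpts t ht, ← Real.rpow_mul (by linarith : (0:ℝ) ≤ t)]
        congr 1; rw [hγ]; ring
      rw [hval 1 le_rfl, hval 2 (by norm_num), hval 3 (by norm_num), Real.one_rpow] at happ
      have hstrict := (Real.strictConcaveOn_rpow hγ0 hγ1).2
        (Set.mem_Ici.mpr (by norm_num : (0:ℝ) ≤ 1)) (Set.mem_Ici.mpr (by norm_num : (0:ℝ) ≤ 3))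
        (by norm_num) (by norm_num : (0:ℝ) < 1/2) (by norm_num : (0:ℝ) < 1/2) (by norm_num)
      simp only [smul_eq_mul, Real.one_rpow] at hstrict
      rw [show ((1:ℝ)/2 * 1 + 1/2 * 3 : ℝ) = 2 by norm_num] at hstrict
      linarith
    · -- β = 0 : log-concavity fails
      have happ := hcon.2.1 hβ (hptsmem 1 le_rfl) (hptsmem 3 (by norm_num))
        (by norm_num : (0:ℝ) ≤ 1/2) (by norm_num : (0:ℝ) ≤ 1/2) (by norm_num)
        (by rw [hmid]; exact hptsmem 2 (by norm_num))
      simp only [] at happ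
      rw [hmid] at happ
      have hval : ∀ t : ℝ, 1 ≤ t →
          Real.log ((dualNorm H (pts t - xbar) / r) ^ (1 / q)) = (1/q) * Real.log t := by
        intro t ht
        rw [hvpts t ht, Real.log_rpow (by linarith)]
      rw [hval 1 le_rfl, hval 2 (by norm_num), hval 3 (by norm_num), Real.log_one] at happ
      have hlog : Real.log 3 / 2 < Real.log 2 := by
        have h43 : Real.log 3 < Real.log 4 := Real.log_lt_log (by norm_num) (by norm_num)
        have h4 : Real.log 4 = 2 * Real.log 2 := by
          rw [show (4:ℝ) = 2^(2:ℕ) by norm_num, Real.log_pow]; push_cast; ring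
        linarith
      have hinv : 1/q < 0 := div_neg_of_pos_of_neg one_pos hq0
      nlinarith [mul_neg_of_neg_of_pos hinv (by linarith : (0:ℝ) < Real.log 2 - Real.log 3 / 2)]
    · -- 0 < β : concavity of t ^ (β/q) fails, β/q < 0
      set γ := β / q with hγ
      have hγ0 : γ < 0 := div_neg_of_pos_of_neg hβ hq0
      have happ := hcon.2.2 hβ (hptsmem 1 le_rfl) (hptsmem 3 (by norm_num))
        (by norm_num : (0:ℝ) ≤ 1/2) (by norm_num : (0:ℝ) ≤ 1/2) (by norm_num)
        (by rw [hmid]; exact hptsmem 2 (by norm_num))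
      simp only [] at happ
      rw [hmid] at happ
      have hval : ∀ t : ℝ, 1 ≤ t →
          ((dualNorm H (pts t - xbar) / r) ^ (1 / q) : ℝ) ^ β = t ^ γ := by
        intro t ht
        rw [hvpts t ht, ← Real.rpow_mul (by linarith : (0:ℝ) ≤ t)]
        congr 1; rw [hγ]; ring
      rw [hval 1 le_rfl, hval 2 (by norm_num), hval 3 (by norm_num), Real.one_rpow] at happ
      have h1 : (4:ℝ) ^ (γ/2) < 3 ^ (γ/2) :=
        Real.rpow_lt_rpow_of_neg (by norm_num) (by norm_num) (by linarith)
      have h2 : (4:ℝ) ^ (γ/2) = 2 ^ γ := by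
        rw [show (4:ℝ) = 2*2 by norm_num,
          Real.mul_rpow (by norm_num) (by norm_num),
          ← Real.rpow_add (by norm_num : (0:ℝ) < 2)]
        congr 1; ring
      have h3 : (3:ℝ) ^ (γ/2) * 3 ^ (γ/2) = 3 ^ γ := by
        rw [← Real.rpow_add (by norm_num : (0:ℝ) < 3)]
        congr 1; ring
      nlinarith [sq_nonneg (1 - (3:ℝ) ^ (γ/2)), h1, h2, h3, happ]
  -- conclusion
  refine ⟨P1, P2, ?_⟩
  apply le_antisymm
  · apply sSup_le
    rintro x ⟨b, rfl, hb1, hbcon⟩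
    rw [EReal.coe_le_coe_iff]
    by_contra hlt
    push_neg at hlt
    exact P2 b hlt hb1 hbcon
  · exact le_sSup ⟨q, rfl, by linarith, P1⟩
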